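/- Let M be a monoid such that R₁(M) ≠ {1}, where R₁(M) = {x ∈ M | ∃ y ∈ M, x·y = 1}. Then for every n ≥ 1 there is a monoid morphism φ : 𝔹^(n) * M → 𝔹 * M with φ⁻¹(1) = {1}, where 𝔹^(n) is the n-fold free product of the bicyclic monoid 𝔹 with itself. -/

import Mathlib

open FreeMonoid

/-- Defining relation of the `n`-fold free product `𝔹^(n)` of bicyclic monoids:
generators `a_i = (i, true)`, `ā_i = (i, false)` with relations `a_i ā_i = 1`. -/
def bicyclicRel (n : ℕ) :
    FreeMonoid (Fin n × Bool) → FreeMonoid (Fin n × Bool) → Prop := fun w₁ w₂ =>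
  ∃ i : Fin n, w₁ = of (i, true) * of (i, false) ∧ w₂ = 1

/-- The `n`-fold free product `𝔹^(n)` of the bicyclic monoid with itself. -/
def BicyclicPow (n : ℕ) : Type := (conGen (bicyclicRel n)).Quotient

instance (n : ℕ) : Monoid (BicyclicPow n) :=
  inferInstanceAs (Monoid (conGen (bicyclicRel n)).Quotient)

/-- The bicyclic monoid `𝔹 = ⟨a, ā | aā = 1⟩`. -/
abbrev Bicyclic : Type := BicyclicPow 1

set_option linter.unusedSectionVars false

namespace Stmt4

noncomputable section
open Classical

variable {M : Type}

inductive Lett (M : Type) : Type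
  | la : Lett M
  | lb : Lett M
  | lm : M → Lett M

open Lett

/-- machine op for `a` : pop `lb` if on top, else push `la`. -/
def fA : List (Lett M) → List (Lett M)
  | lb :: t => t
  | L => la :: L

/-- machine op for `ā` : push `lb`. -/
def fB (L : List (Lett M)) : List (Lett M) := lb :: L

@[simp] lemma fA_lb (t : List (Lett M)) : fA (lb :: t) = t := rfl
@[simp] lemma fA_nil : fA ([] : List (Lett M)) = [la] := rfl
@[simp] lemma fA_la (t : List (Lett M)) : fA (la :: t) = la :: la :: t := rfl
@[simp] lemma fA_lm (m : M) (t : List (Lett M)) : fA (lm m :: t) = la :: lm m :: t := rfl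
@[simp] lemma fB_def (L : List (Lett M)) : fB L = lb :: L := rfl

lemma fA_fB (L : List (Lett M)) : fA (fB L) = L := rfl

/-- strip leading `la`'s -/
def stripA : List (Lett M) → ℕ × List (Lett M)
  | Lett.la :: t => ((stripA t).1 + 1, (stripA t).2)
  | L => (0, L)

/-- strip leading `lb`'s -/
def stripB : List (Lett M) → ℕ × List (Lett M)
  | Lett.lb :: t => ((stripB t).1 + 1, (stripB t).2)
  | L => (0, L)

@[simp] lemma stripA_nil : stripA ([] : List (Lett M)) = (0, []) := rfl
@[simp] lemma stripA_lb (t : List (Lett M)) : stripA (lb :: t) = (0, lb :: t) := rfl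
@[simp] lemma stripA_lm (m : M) (t : List (Lett M)) : stripA (lm m :: t) = (0, lm m :: t) := rfl
@[simp] lemma stripA_la (t : List (Lett M)) :
    stripA (la :: t) = ((stripA t).1 + 1, (stripA t).2) := rfl
@[simp] lemma stripB_nil : stripB ([] : List (Lett M)) = (0, []) := rfl
@[simp] lemma stripB_la (t : List (Lett M)) : stripB (la :: t) = (0, la :: t) := rfl
@[simp] lemma stripB_lm (m : M) (t : List (Lett M)) : stripB (lm m :: t) = (0, lm m :: t) := rfl
@[simp] lemma stripB_lb (t : List (Lett M)) :
    stripB (lb :: t) = ((stripB t).1 + 1, (stripB t).2) := rfl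

lemma stripA_app (k : ℕ) {R : List (Lett M)} (h : stripA R = (0, R)) :
    stripA (List.replicate k la ++ R) = (k, R) := by
  induction k with
  | zero => simpa using h
  | succ k ih => simp [List.replicate_succ, ih]

lemma stripB_app (k : ℕ) {R : List (Lett M)} (h : stripB R = (0, R)) :
    stripB (List.replicate k lb ++ R) = (k, R) := by
  induction k with
  | zero => simpa using h
  | succ k ih => simp [List.replicate_succ, ih]

lemma stripA_len (L : List (Lett M)) : (stripA L).2.length + (stripA L).1 = L.length := by
  induction L with
  | nil => rfl
  | cons a t ih =>
    cases a with
    | la => simp [← ih]; omega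
    | lb => simp
    | lm m => simp

lemma stripB_len (L : List (Lett M)) : (stripB L).2.length + (stripB L).1 = L.length := by
  induction L with
  | nil => rfl
  | cons a t ih =>
    cases a with
    | lb => simp [← ih]; omega
    | la => simp
    | lm m => simp

lemma stripA_recon (L : List (Lett M)) :
    L = List.replicate (stripA L).1 la ++ (stripA L).2 := by
  induction L with
  | nil => rfl
  | cons a t ih =>
    cases a with
    | la => simpa [List.replicate_succ] using ih
    | lb => simp
    | lm m => simp

lemma stripB_recon (L : List (Lett M)) :
    L = List.replicate (stripB L).1 lb ++ (stripB L).2 := by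
  induction L with
  | nil => rfl
  | cons a t ih =>
    cases a with
    | lb => simpa [List.replicate_succ] using ih
    | la => simp
    | lm m => simp

lemma stripA_snd (L : List (Lett M)) : stripA (stripA L).2 = (0, (stripA L).2) := by
  induction L with
  | nil => rfl
  | cons a t ih => cases a <;> simp [ih]

lemma stripB_snd (L : List (Lett M)) : stripB (stripB L).2 = (0, (stripB L).2) := by
  induction L with
  | nil => rfl
  | cons a t ih => cases a <;> simp [ih]

variable [Monoid M]

/-- machine op for `m ∈ M`. -/
def fM (m : M) (L : List (Lett M)) : List (Lett M) :=
  if m = 1 then L else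
  match L with
  | lm h :: t => if m * h = 1 then t else lm (m * h) :: t
  | L => lm m :: L



@[simp] lemma fM_one (L : List (Lett M)) : fM 1 L = L := by simp [fM]

lemma fM_of_ne {m : M} (hm : m ≠ 1) (L : List (Lett M)) :
    fM m L = match L with
  | lm h :: t => if m * h = 1 then t else lm (m * h) :: t
  | L => lm m :: L := by simp [fM, hm]

@[simp] lemma fM_nil {m : M} (hm : m ≠ 1) : fM m ([] : List (Lett M)) = [lm m] := by
  simp [fM, hm]

@[simp] lemma fM_la {m : M} (hm : m ≠ 1) (t : List (Lett M)) :
    fM m (la :: t) = lm m :: la :: t := by simp [fM, hm]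

@[simp] lemma fM_lb {m : M} (hm : m ≠ 1) (t : List (Lett M)) :
    fM m (lb :: t) = lm m :: lb :: t := by simp [fM, hm]

lemma fM_lm {m : M} (hm : m ≠ 1) (h : M) (t : List (Lett M)) :
    fM m (lm h :: t) = if m * h = 1 then t else lm (m * h) :: t := by
  simp [fM, hm]

/-- head is not an `M`-letter -/
def headNotM : List (Lett M) → Prop
  | lm _ :: _ => False
  | _ => True

/-- reduced lists: no `1` letters, no two adjacent `M`-letters -/
def Red : List (Lett M) → Prop
  | [] => True
  | la :: t => Red t
  | lb :: t => Red t
  | lm m :: t => m ≠ 1 ∧ headNotM t ∧ Red t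

lemma red_fA {L : List (Lett M)} (h : Red L) : Red (fA L) := by
  rcases L with _ | ⟨a, t⟩
  · trivial
  · cases a with
    | la => exact h
    | lb => exact (h : Red (lb :: t))
    | lm m => exact h

lemma red_fB {L : List (Lett M)} (h : Red L) : Red (fB L) := h

lemma fM_headNotM {m : M} (hm : m ≠ 1) {t : List (Lett M)} (ht : headNotM t) :
    fM m t = lm m :: t := by
  rcases t with _ | ⟨a, t⟩
  · simp [fM, hm]
  · cases a with
    | la => simp [fM, hm]
    | lb => simp [fM, hm]
    | lm h => exact absurd ht (by simp [headNotM])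

lemma red_fM (m : M) {L : List (Lett M)} (h : Red L) : Red (fM m L) := by
  by_cases hm : m = 1
  · simpa [hm]
  rcases L with _ | ⟨a, t⟩
  · rw [fM_nil hm]; exact ⟨hm, trivial, trivial⟩
  · cases a with
    | la => rw [fM_la hm]; exact ⟨hm, trivial, h⟩
    | lb => rw [fM_lb hm]; exact ⟨hm, trivial, h⟩
    | lm h' =>
      obtain ⟨h1, h2, h3⟩ := h
      rw [fM_lm hm]
      split
      · exact h3
      · exact ⟨by assumption, h2, h3⟩

/-- multiplicativity of `fM` on reduced lists -/
lemma fM_mul (m m' : M) {L : List (Lett M)} (h : Red L) :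
    fM m (fM m' L) = fM (m * m') L := by
  by_cases hm : m = 1
  · simp [hm]
  by_cases hm' : m' = 1
  · simp [hm']
  rcases L with _ | ⟨a, t⟩
  · by_cases hmm : m * m' = 1 <;>
      simp [fM, hm, hm', hmm, mul_assoc]
  cases a with
  | la => by_cases hmm : m * m' = 1 <;> simp [fM, hm, hm', hmm, mul_assoc]
  | lb => by_cases hmm : m * m' = 1 <;> simp [fM, hm, hm', hmm, mul_assoc]
  | lm h' =>
    obtain ⟨h1, h2, h3⟩ := h
    rw [fM_lm hm']
    by_cases e1 : m' * h' = 1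
    · rw [if_pos e1, fM_headNotM hm h2]
      have key : (m * m') * h' = m := by rw [mul_assoc, e1, mul_one]
      by_cases e2 : m * m' = 1
      · have hh : h' = m := by rw [← key, e2, one_mul]
        rw [e2, fM_one, hh]
      · rw [fM_lm e2, key, if_neg hm]
    · rw [if_neg e1, fM_lm hm]
      by_cases e2 : m * m' = 1
      · have h'' : m * (m' * h') = h' := by rw [← mul_assoc, e2, one_mul]
        rw [h'', if_neg h1, e2, fM_one]
      · rw [fM_lm e2, ← mul_assoc]
variable (M) in
/-- carrier: reduced stacks -/
def Tc : Type := {L : List (Lett M) // Red L}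

def endA : Function.End (Tc M) := fun L => ⟨fA L.1, red_fA L.2⟩
def endB : Function.End (Tc M) := fun L => ⟨fB L.1, red_fB L.2⟩

lemma endA_endB : (endA : Function.End (Tc M)) * endB = 1 := by
  funext L
  exact Subtype.ext (fA_fB L.1)

def endM : M →* Function.End (Tc M) where
  toFun m := fun L => ⟨fM m L.1, red_fM m L.2⟩
  map_one' := by
    funext L
    exact Subtype.ext (fM_one L.1)
  map_mul' m m' := by
    funext L
    exact Subtype.ext (fM_mul m m' L.2).symm

variable (M) in
def rhoB : Bicyclic →* Function.End (Tc M) :=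
  Con.lift _ (FreeMonoid.lift fun p : Fin 1 × Bool => if p.2 then endA else endB) (by
    apply Con.conGen_le.2
    rintro w₁ w₂ ⟨i, rfl, rfl⟩
    apply (Con.ker_rel _).2
    simp only [map_mul, map_one, FreeMonoid.lift_eval_of]
    exact endA_endB)

variable (M) in
def rho : Monoid.Coprod Bicyclic M →* Function.End (Tc M) :=
  Monoid.Coprod.lift (rhoB M) endM

lemma pow_one_cancel {P : Type*} [Monoid P] {u v : P} (h : u * v = 1) (k : ℕ) :
    u ^ k * v ^ k = 1 := by
  induction k with
  | zero => simp
  | succ k ih =>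
    rw [pow_succ', pow_succ, mul_assoc, ← mul_assoc (u ^ k), ih, one_mul, h]

section n
variable (n : ℕ)

/-- canonical projection -/
def mkB : FreeMonoid (Fin n × Bool) →* BicyclicPow n := Con.mk' _

lemma mkB_rel (i : Fin n) : mkB n (of (i, true)) * mkB n (of (i, false)) = 1 := by
  rw [← map_mul, show (1 : BicyclicPow n) = mkB n 1 from (map_one _).symm]
  exact (Con.eq _).2 (ConGen.Rel.of _ _ ⟨i, rfl, rfl⟩)

/-- generators of `Bicyclic` -/
def aB : Bicyclic := mkB 1 (of (0, true))
def bB : Bicyclic := mkB 1 (of (0, false))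

lemma aB_bB : aB * bB = 1 := mkB_rel 1 0

variable (x y : M)

/-- images of the generators of `𝔹^(n)` in `𝔹 ∗ M` -/
def genImg : Fin n × Bool → Monoid.Coprod Bicyclic M := fun p =>
  if p.2 then
    (Monoid.Coprod.inl aB) ^ (p.1.1 + 1) * Monoid.Coprod.inr x *
      (Monoid.Coprod.inl aB) ^ (p.1.1 + 1)
  else
    (Monoid.Coprod.inl bB) ^ (p.1.1 + 1) * Monoid.Coprod.inr y *
      (Monoid.Coprod.inl bB) ^ (p.1.1 + 1)

lemma genImg_rel (hxy : x * y = 1) (i : Fin n) :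
    genImg n x y (i, true) * genImg n x y (i, false) = 1 := by
  have hab : (Monoid.Coprod.inl aB : Monoid.Coprod Bicyclic M) * Monoid.Coprod.inl bB = 1 := by
    rw [← map_mul, aB_bB, map_one]
  have hxy' : (Monoid.Coprod.inr x : Monoid.Coprod Bicyclic M) * Monoid.Coprod.inr y = 1 := by
    rw [← map_mul, hxy, map_one]
  simp only [genImg, if_pos, if_neg]
  calc (Monoid.Coprod.inl aB) ^ (i.1 + 1) * Monoid.Coprod.inr x *
      (Monoid.Coprod.inl aB) ^ (i.1 + 1) *
      ((Monoid.Coprod.inl bB) ^ (i.1 + 1) * Monoid.Coprod.inr y *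
        (Monoid.Coprod.inl bB) ^ (i.1 + 1))
      = (Monoid.Coprod.inl aB) ^ (i.1 + 1) * (Monoid.Coprod.inr x *
        ((Monoid.Coprod.inl aB) ^ (i.1 + 1) * (Monoid.Coprod.inl bB) ^ (i.1 + 1)) *
          Monoid.Coprod.inr y) * (Monoid.Coprod.inl bB) ^ (i.1 + 1) := by
        simp only [mul_assoc]
  _ = 1 := by
        rw [pow_one_cancel hab, mul_one, hxy', mul_one, pow_one_cancel hab]

def phiB (hxy : x * y = 1) : BicyclicPow n →* Monoid.Coprod Bicyclic M :=
  Con.lift _ (FreeMonoid.lift (genImg n x y)) (by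
    apply Con.conGen_le.2
    rintro w₁ w₂ ⟨i, rfl, rfl⟩
    apply (Con.ker_rel _).2
    simp only [map_mul, map_one, FreeMonoid.lift_eval_of]
    exact genImg_rel n x y hxy i)

def phi (hxy : x * y = 1) : Monoid.Coprod (BicyclicPow n) M →* Monoid.Coprod Bicyclic M :=
  Monoid.Coprod.lift (phiB n x y hxy) Monoid.Coprod.inr

/-- the `a`-generator of the `k`-th copy (junk `1` if out of range) -/
def av (k : ℕ) : Monoid.Coprod (BicyclicPow n) M :=
  if h : k < n then Monoid.Coprod.inl (mkB n (of (⟨k, h⟩, true))) else 1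

def bv (k : ℕ) : Monoid.Coprod (BicyclicPow n) M :=
  if h : k < n then Monoid.Coprod.inl (mkB n (of (⟨k, h⟩, false))) else 1

lemma av_bv {k : ℕ} (h : k < n) : av (M := M) n k * bv n k = 1 := by
  rw [av, bv, dif_pos h, dif_pos h]
  rw [← MonoidHom.map_mul Monoid.Coprod.inl, mkB_rel, map_one]

mutual

/-- parse a reduced stack back into an element of `𝔹^(n) ∗ M` -/
def parse : List (Lett M) → Option (Monoid.Coprod (BicyclicPow n) M)
  | [] => some 1
  | lm m :: t => Option.map (fun v => Monoid.Coprod.inr m * v) (parse t)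
  | la :: t =>
    match h : (stripA t).2 with
    | lm c :: t' => if c = x then pa (stripA t).1 t' else none
    | _ => none
  | lb :: t =>
    match h : (stripB t).2 with
    | lm c :: t' => if c = y then pb (stripB t).1 t' else none
    | _ => none
  termination_by L => L.length
  decreasing_by
  · simp
  · have h1 := stripA_len t
    have h2 : (stripA t).2.length = t'.length + 1 := by rw [h]; simp
    simp only [List.length_cons]; omega
  · have h1 := stripB_len t
    have h2 : (stripB t).2.length = t'.length + 1 := by rw [h]; simp
    simp only [List.length_cons]; omega

/-- pending `a`-block of size `k+1`; expects its trailing run -/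
def pa (k : ℕ) (L : List (Lett M)) : Option (Monoid.Coprod (BicyclicPow n) M) :=
  if hs : k + 1 ≤ (stripA L).1 then
    Option.map (fun v => av n k * v)
      (parse (List.replicate ((stripA L).1 - (k + 1)) la ++ (stripA L).2))
  else
    match h : (stripA L).2 with
    | lm c :: L2 =>
        if c = y ∧ 1 ≤ (stripA L).1 then
          Option.map (fun v => av n k * v) (pb (k - (stripA L).1) L2)
        else none
    | lb :: L2 =>
        if (stripA L).1 = 0 then
          match hq : (stripB L2).2 with
          | lm c :: L3 =>
              if c = y then
                Option.map (fun v => av n k * v) (pb ((stripB L2).1 + 1 + k) L3)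
              else none
          | _ => none
        else none
    | _ => none
  termination_by L.length
  decreasing_by
  · have := stripA_len L
    simp only [List.length_append, List.length_replicate]; omega
  · have h1 := stripA_len L
    have h2 : (stripA L).2.length = L2.length + 1 := by rw [h]; simp
    omega
  · have hl := stripA_len L
    have h2 : (stripA L).2.length = L2.length + 1 := by rw [h]; simp
    have h3 := stripB_len L2
    have h4 : (stripB L2).2.length = L3.length + 1 := by rw [hq]; simp
    omega

/-- pending `ā`-block of size `k+1`; expects its trailing run -/
def pb (k : ℕ) (L : List (Lett M)) : Option (Monoid.Coprod (BicyclicPow n) M) :=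
  if hs : k + 1 ≤ (stripB L).1 then
    Option.map (fun v => bv n k * v)
      (parse (List.replicate ((stripB L).1 - (k + 1)) lb ++ (stripB L).2))
  else none
  termination_by L.length
  decreasing_by
  · have := stripB_len L
    simp only [List.length_append, List.length_replicate]; omega

end

@[simp] lemma parse_nil : parse n x y ([] : List (Lett M)) = some 1 := by simp [parse]

@[simp] lemma parse_lm (m : M) (t : List (Lett M)) :
    parse n x y (lm m :: t) =
      Option.map (fun v => Monoid.Coprod.inr m * v) (parse n x y t) := by
  simp [parse]

lemma parse_blockA (p : ℕ) (c : M) {R : List (Lett M)} :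
    parse n x y (List.replicate (p + 1) la ++ lm c :: R) =
      if c = x then pa n x y p R else none := by
  rw [List.replicate_succ, List.cons_append]
  have hA : stripA (List.replicate p la ++ lm c :: R) = (p, lm c :: R) :=
    stripA_app p (by simp)
  simp only [parse]
  split
  next c' t' heq =>
    rw [hA] at heq
    simp only [List.cons.injEq, Lett.lm.injEq] at heq
    obtain ⟨rfl, rfl⟩ := heq
    simp only [hA]
  next heq =>
    exact absurd (by rw [hA]) (heq c R)

lemma parse_blockB (p : ℕ) (c : M) {R : List (Lett M)} :
    parse n x y (List.replicate (p + 1) lb ++ lm c :: R) =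
      if c = y then pb n x y p R else none := by
  rw [List.replicate_succ, List.cons_append]
  have hB : stripB (List.replicate p lb ++ lm c :: R) = (p, lm c :: R) :=
    stripB_app p (by simp)
  simp only [parse]
  split
  next c' t' heq =>
    rw [hB] at heq
    simp only [List.cons.injEq, Lett.lm.injEq] at heq
    obtain ⟨rfl, rfl⟩ := heq
    simp only [hB]
  next heq =>
    exact absurd (by rw [hB]) (heq c R)

lemma pa_main {k s : ℕ} (hs : k + 1 ≤ s) {R : List (Lett M)} (h0 : stripA R = (0, R)) :
    pa n x y k (List.replicate s la ++ R) =
      Option.map (fun v => av n k * v)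
        (parse n x y (List.replicate (s - (k + 1)) la ++ R)) := by
  have hA : stripA (List.replicate s la ++ R) = (s, R) := stripA_app s h0
  rw [pa]
  rw [hA]
  simp only [hs, dif_pos]

lemma pa_ero1 {k s : ℕ} (h1 : 1 ≤ s) (hsk : s ≤ k) (c : M) (R : List (Lett M)) :
    pa n x y k (List.replicate s la ++ lm c :: R) =
      if c = y then Option.map (fun v => av n k * v) (pb n x y (k - s) R) else none := by
  have hA : stripA (List.replicate s la ++ lm c :: R) = (s, lm c :: R) :=
    stripA_app s (by simp)
  rw [pa, hA]
  have : ¬ (k + 1 ≤ s) := by omega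
  simp only [this, dif_neg, not_false_iff]
  by_cases hc : c = y <;> simp [hc, h1]

lemma pa_ero2 {k u : ℕ} (c : M) (R : List (Lett M)) :
    pa n x y k (List.replicate (u + 1) lb ++ lm c :: R) =
      if c = y then Option.map (fun v => av n k * v) (pb n x y (u + 1 + k) R) else none := by
  have h2 : stripB (List.replicate u lb ++ lm c :: R) = (u, lm c :: R) :=
    stripB_app u (by simp)
  rw [List.replicate_succ, List.cons_append, pa]
  have hA : stripA (lb :: (List.replicate u lb ++ lm c :: R))
      = (0, lb :: (List.replicate u lb ++ lm c :: R)) := by simp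
  rw [hA]
  have : ¬ (k + 1 ≤ 0) := by omega
  simp only [this, dif_neg, not_false_iff, if_true]
  split
  next c' t' heq =>
    rw [h2] at heq
    simp only [List.cons.injEq, Lett.lm.injEq] at heq
    obtain ⟨rfl, rfl⟩ := heq
    simp only [h2]
  next heq =>
    exact absurd (by rw [h2]) (heq c R)

lemma pb_main {k s : ℕ} (hs : k + 1 ≤ s) {R : List (Lett M)} (h0 : stripB R = (0, R)) :
    pb n x y k (List.replicate s lb ++ R) =
      Option.map (fun v => bv n k * v)
        (parse n x y (List.replicate (s - (k + 1)) lb ++ R)) := by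
  have hB : stripB (List.replicate s lb ++ R) = (s, R) := stripB_app s h0
  rw [pb, hB]
  simp only [hs, dif_pos]

end n

/-! ### iterate lemmas for the machine -/

lemma fA_iter_push (j : ℕ) {R : List (Lett M)} (h : stripB R = (0, R)) :
    fA^[j] R = List.replicate j la ++ R := by
  induction j generalizing R with
  | zero => simp
  | succ j ih =>
    have hfa : fA R = la :: R := by
      rcases R with _ | ⟨a, t⟩
      · rfl
      · cases a with
        | la => rfl
        | lb => simp at h
        | lm m => rfl
    rw [Function.iterate_succ_apply, hfa, ih (by simp)]
    rw [show (la :: R) = [la] ++ R from rfl, ← List.append_assoc, ← List.replicate_succ']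

lemma fB_iter (j : ℕ) (L : List (Lett M)) :
    fB^[j] L = List.replicate j lb ++ L := by
  induction j generalizing L with
  | zero => simp
  | succ j ih =>
    rw [Function.iterate_succ_apply, fB_def, ih]
    rw [show (lb :: L) = [lb] ++ L from rfl, ← List.append_assoc, ← List.replicate_succ']

lemma fA_iter_pop {j r : ℕ} (hj : j ≤ r) (R : List (Lett M)) :
    fA^[j] (List.replicate r lb ++ R) = List.replicate (r - j) lb ++ R := by
  induction j generalizing r with
  | zero => simp
  | succ j ih =>
    obtain ⟨r', rfl⟩ : ∃ r', r = r' + 1 := ⟨r - 1, by omega⟩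
    rw [Function.iterate_succ_apply, List.replicate_succ, List.cons_append, fA_lb,
      ih (by omega)]
    congr 2
    omega

lemma fA_iter_pop_push {j r : ℕ} (hj : r ≤ j) {R : List (Lett M)} (h : stripB R = (0, R)) :
    fA^[j] (List.replicate r lb ++ R) = List.replicate (j - r) la ++ R := by
  obtain ⟨d, rfl⟩ : ∃ d, j = d + r := ⟨j - r, by omega⟩
  rw [Function.iterate_add_apply, fA_iter_pop le_rfl, Nat.sub_self, List.replicate_zero,
    List.nil_append, fA_iter_push d h]
  congr 2
  omega

section n
variable (n : ℕ) (x y : M)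

/-! ### extraction lemmas -/

lemma parse_la_some {t : List (Lett M)} {v : Monoid.Coprod (BicyclicPow n) M}
    (h : parse n x y (la :: t) = some v) :
    ∃ p t₂, t = List.replicate p la ++ lm x :: t₂ ∧ pa n x y p t₂ = some v := by
  revert h
  simp only [parse]
  split
  next c t₂ heq =>
    intro h
    split at h
    next hc =>
      subst hc
      refine ⟨(stripA t).1, t₂, ?_, h⟩
      conv_lhs => rw [stripA_recon t]
      rw [heq]
    next => exact absurd h (by simp)
  next => intro h; exact absurd h (by simp)

lemma parse_lb_some {t : List (Lett M)} {v : Monoid.Coprod (BicyclicPow n) M}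
    (h : parse n x y (lb :: t) = some v) :
    ∃ p t₂, t = List.replicate p lb ++ lm y :: t₂ ∧ pb n x y p t₂ = some v := by
  revert h
  simp only [parse]
  split
  next c t₂ heq =>
    intro h
    split at h
    next hc =>
      subst hc
      refine ⟨(stripB t).1, t₂, ?_, h⟩
      conv_lhs => rw [stripB_recon t]
      rw [heq]
    next => exact absurd h (by simp)
  next => intro h; exact absurd h (by simp)

lemma pb_some {k : ℕ} {L : List (Lett M)} {v : Monoid.Coprod (BicyclicPow n) M}
    (h : pb n x y k L = some v) :
    ∃ s R v', k + 1 ≤ s ∧ L = List.replicate s lb ++ R ∧ stripB R = (0, R) ∧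
      v = bv n k * v' ∧ parse n x y (List.replicate (s - (k + 1)) lb ++ R) = some v' := by
  rw [pb] at h
  split at h
  next hs =>
    obtain ⟨v', hv', rfl⟩ := Option.map_eq_some_iff.1 h
    exact ⟨(stripB L).1, (stripB L).2, v', hs, stripB_recon L, stripB_snd L, rfl, hv'⟩
  next => exact absurd h (by simp)

/-! ### the three step lemmas -/

lemma step_m (m : M) {L : List (Lett M)} {v : Monoid.Coprod (BicyclicPow n) M}
    (h : parse n x y L = some v) :
    parse n x y (fM m L) = some (Monoid.Coprod.inr m * v) := by
  by_cases hm : m = 1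
  · subst hm; rw [fM_one]; simpa using h
  rcases L with _ | ⟨a, t⟩
  · rw [fM_nil hm]
    simp only [parse_nil, Option.some.injEq] at h
    rw [show (lm m :: [] : List (Lett M)) = lm m :: [] from rfl]
    simp [← h]
  cases a with
  | la => rw [fM_la hm]; simp [h]
  | lb => rw [fM_lb hm]; simp [h]
  | lm h' =>
    simp only [parse_lm, Option.map_eq_some_iff] at h
    obtain ⟨v', hv', rfl⟩ := h
    rw [fM_lm hm]
    split
    next e1 =>
      rw [hv']
      congr 1
      rw [← mul_assoc, ← MonoidHom.map_mul, e1, map_one, one_mul]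
    next e1 =>
      simp only [parse_lm, hv', Option.map_some]
      congr 1
      rw [← mul_assoc, ← MonoidHom.map_mul]

lemma step_b (hy1 : y ≠ 1) (i : ℕ) {L : List (Lett M)} {v : Monoid.Coprod (BicyclicPow n) M}
    (h : parse n x y L = some v) :
    parse n x y (fB^[i+1] (fM y (fB^[i+1] L))) = some (bv n i * v) := by
  rw [fB_iter (i+1) L]
  rw [show List.replicate (i+1) lb ++ L = lb :: (List.replicate i lb ++ L) from by
    rw [List.replicate_succ, List.cons_append]]
  rw [fM_lb hy1, fB_iter]
  rw [show lm y :: (lb :: (List.replicate i lb ++ L)) =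
    lm y :: (List.replicate (i+1) lb ++ L) from by rw [List.replicate_succ, List.cons_append]]
  rw [show List.replicate (i+1) lb ++ lm y :: (List.replicate (i+1) lb ++ L) =
      List.replicate (i+1) lb ++ (lm y :: (List.replicate (i+1) lb ++ L)) from rfl]
  rw [parse_blockB, if_pos rfl]
  conv_lhs =>
    rw [show List.replicate (i+1) lb ++ L
        = List.replicate (i+1) lb ++ (List.replicate (stripB L).1 lb ++ (stripB L).2) from by
      rw [← stripB_recon L]]
  rw [← List.append_assoc, ← List.replicate_add]
  rw [pb_main n x y (by omega) (stripB_snd L)]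
  rw [show i + 1 + (stripB L).1 - (i + 1) = (stripB L).1 from by omega]
  rw [← stripB_recon L, h]
  rfl

lemma step_a (hx1 : x ≠ 1) (hxy : x * y = 1) {i : ℕ} (hi : i < n)
    {L : List (Lett M)} {v : Monoid.Coprod (BicyclicPow n) M}
    (h : parse n x y L = some v) :
    parse n x y (fA^[i+1] (fM x (fA^[i+1] L))) = some (av n i * v) := by
  have key : ∀ R : List (Lett M), stripB R = (0, R) →
      fA^[i+1] (fM x (fA^[i+1] R)) =
        List.replicate (i+1) la ++ lm x :: (List.replicate (i+1) la ++ R) := by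
    intro R h0
    rw [fA_iter_push _ h0]
    rw [show List.replicate (i+1) la ++ R = la :: (List.replicate i la ++ R) from by
      rw [List.replicate_succ, List.cons_append]]
    rw [fM_la hx1]
    rw [fA_iter_push _ (by simp)]
  rcases L with _ | ⟨a, t⟩
  · -- empty stack
    rw [key [] (by simp), parse_blockA, if_pos rfl,
      pa_main n x y le_rfl (by simp), Nat.sub_self]
    simp only [parse_nil, Option.some.injEq] at h
    simp [← h]
  cases a with
  | lm m =>
    rw [key _ (by simp), parse_blockA, if_pos rfl,
      pa_main n x y le_rfl (by simp), Nat.sub_self]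
    simp [h]
  | la =>
    obtain ⟨p, t₂, rfl, hpa⟩ := parse_la_some n x y h
    rw [show (la :: (List.replicate p la ++ lm x :: t₂) : List (Lett M))
        = List.replicate (p+1) la ++ lm x :: t₂ from by
      rw [List.replicate_succ, List.cons_append]]
    rw [key _ (by simp [List.replicate_succ]), ← List.append_assoc, ← List.replicate_add]
    rw [parse_blockA, if_pos rfl, pa_main n x y (by omega) (by simp)]
    rw [show i + 1 + (p + 1) - (i + 1) = p + 1 from by omega]
    rw [parse_blockA, if_pos rfl, hpa]
    rfl
  | lb =>
    obtain ⟨q, t₂, rfl, hpb⟩ := parse_lb_some n x y h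
    rw [show (lb :: (List.replicate q lb ++ lm y :: t₂) : List (Lett M))
        = List.replicate (q+1) lb ++ lm y :: t₂ from by
      rw [List.replicate_succ, List.cons_append]]
    rcases lt_trichotomy i q with hiq | rfl | hiq
    · -- i < q : erosion type 2
      rw [fA_iter_pop (by omega)]
      rw [show q + 1 - (i + 1) = (q - i - 1) + 1 from by omega]
      rw [show (List.replicate (q - i - 1 + 1) lb ++ lm y :: t₂ : List (Lett M))
          = lb :: (List.replicate (q - i - 1) lb ++ lm y :: t₂) from by
        rw [List.replicate_succ, List.cons_append]]
      rw [fM_lb hx1, fA_iter_push _ (by simp)]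
      rw [show (lm x :: (lb :: (List.replicate (q - i - 1) lb ++ lm y :: t₂)) : List (Lett M))
          = lm x :: (List.replicate (q - i - 1 + 1) lb ++ lm y :: t₂) from by
        rw [List.replicate_succ, List.cons_append]]
      rw [parse_blockA, if_pos rfl, pa_ero2, if_pos rfl]
      rw [show q - i - 1 + 1 + i = q from by omega, hpb]
      rfl
    · -- i = q : exact cancellation
      rw [fA_iter_pop le_rfl, Nat.sub_self, List.replicate_zero, List.nil_append]
      rw [fM_lm hx1, if_pos hxy]
      obtain ⟨s, R, v', hs, rfl, h0R, rfl, hv'⟩ := pb_some n x y hpb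
      rw [fA_iter_pop (by omega) R]
      rw [hv']
      congr 1
      rw [← mul_assoc, av_bv n hi, one_mul]
    · -- i > q : erosion type 1
      rw [fA_iter_pop_push (by omega) (by simp)]
      rw [show i + 1 - (q + 1) = (i - q - 1) + 1 from by omega]
      rw [show (List.replicate (i - q - 1 + 1) la ++ lm y :: t₂ : List (Lett M))
          = la :: (List.replicate (i - q - 1) la ++ lm y :: t₂) from by
        rw [List.replicate_succ, List.cons_append]]
      rw [fM_la hx1, fA_iter_push _ (by simp)]
      rw [show (lm x :: (la :: (List.replicate (i - q - 1) la ++ lm y :: t₂)) : List (Lett M))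
          = lm x :: (List.replicate (i - q - 1 + 1) la ++ lm y :: t₂) from by
        rw [List.replicate_succ, List.cons_append]]
      rw [parse_blockA, if_pos rfl, pa_ero1 n x y (by omega) (by omega), if_pos rfl]
      rw [show i - (i - q - 1 + 1) = q from by omega, hpb]
      rfl

end n

/-! ### End-level machinery -/

lemma endA_pow (k : ℕ) (L : Tc M) :
    (((endA : Function.End (Tc M)) ^ k) L).1 = fA^[k] L.1 := by
  induction k generalizing L with
  | zero => rfl
  | succ k ih =>
    rw [pow_succ, Function.iterate_succ_apply]
    exact ih (endA L)

lemma endB_pow (k : ℕ) (L : Tc M) :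
    (((endB : Function.End (Tc M)) ^ k) L).1 = fB^[k] L.1 := by
  induction k generalizing L with
  | zero => rfl
  | succ k ih =>
    rw [pow_succ, Function.iterate_succ_apply]
    exact ih (endB L)

section main
variable (n : ℕ) (x y : M) (hxy : x * y = 1)

lemma rho_inl_aB : rho M (Monoid.Coprod.inl aB) = endA := by
  have h1 : rho M (Monoid.Coprod.inl aB) = rhoB M aB := Monoid.Coprod.lift_apply_inl _ _ _
  rw [h1, aB]
  have h2 : rhoB M (mkB 1 (of (0, true)))
      = FreeMonoid.lift (fun p : Fin 1 × Bool => if p.2 then endA else endB) (of (0, true)) :=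
    Con.lift_mk' _ _
  rw [h2, FreeMonoid.lift_eval_of]
  rfl

lemma rho_inl_bB : rho M (Monoid.Coprod.inl bB) = endB := by
  have h1 : rho M (Monoid.Coprod.inl bB) = rhoB M bB := Monoid.Coprod.lift_apply_inl _ _ _
  rw [h1, bB]
  have h2 : rhoB M (mkB 1 (of (0, false)))
      = FreeMonoid.lift (fun p : Fin 1 × Bool => if p.2 then endA else endB) (of (0, false)) :=
    Con.lift_mk' _ _
  rw [h2, FreeMonoid.lift_eval_of]
  rfl

lemma rho_inr (m : M) : rho M (Monoid.Coprod.inr m) = endM m :=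
  Monoid.Coprod.lift_apply_inr _ _ _

lemma phi_inl_gen (g : Fin n × Bool) :
    phi n x y hxy (Monoid.Coprod.inl (mkB n (of g))) = genImg n x y g := by
  have h1 : phi n x y hxy (Monoid.Coprod.inl (mkB n (of g))) = phiB n x y hxy (mkB n (of g)) :=
    Monoid.Coprod.lift_apply_inl _ _ _
  have h2 : phiB n x y hxy (mkB n (of g)) = FreeMonoid.lift (genImg n x y) (of g) :=
    Con.lift_mk' _ _
  rw [h1, h2, FreeMonoid.lift_eval_of]

lemma rho_gen_true (i : Fin n) (L : Tc M) :
    ((rho M (phi n x y hxy (Monoid.Coprod.inl (mkB n (of (i, true)))))) L).1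
      = fA^[i.1+1] (fM x (fA^[i.1+1] L.1)) := by
  rw [phi_inl_gen]
  rw [show genImg n x y (i, true) = (Monoid.Coprod.inl aB) ^ (i.1 + 1) * Monoid.Coprod.inr x *
      (Monoid.Coprod.inl aB) ^ (i.1 + 1) from by simp [genImg]]
  rw [map_mul, map_mul, rho_inr, map_pow, rho_inl_aB]
  rw [show ((endA ^ (i.1+1) * endM x * endA ^ (i.1+1) : Function.End (Tc M)) L)
      = (endA ^ (i.1+1)) ((endM x) ((endA ^ (i.1+1)) L)) from rfl]
  rw [endA_pow]
  rw [show ((endM x) ((endA ^ (i.1+1)) L)).1 = fM x (((endA ^ (i.1+1)) L).1) from rfl]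
  rw [endA_pow]

lemma rho_gen_false (i : Fin n) (L : Tc M) :
    ((rho M (phi n x y hxy (Monoid.Coprod.inl (mkB n (of (i, false)))))) L).1
      = fB^[i.1+1] (fM y (fB^[i.1+1] L.1)) := by
  rw [phi_inl_gen]
  rw [show genImg n x y (i, false) = (Monoid.Coprod.inl bB) ^ (i.1 + 1) * Monoid.Coprod.inr y *
      (Monoid.Coprod.inl bB) ^ (i.1 + 1) from by simp [genImg]]
  rw [map_mul, map_mul, rho_inr, map_pow, rho_inl_bB]
  rw [show ((endB ^ (i.1+1) * endM y * endB ^ (i.1+1) : Function.End (Tc M)) L)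
      = (endB ^ (i.1+1)) ((endM y) ((endB ^ (i.1+1)) L)) from rfl]
  rw [endB_pow]
  rw [show ((endM y) ((endB ^ (i.1+1)) L)).1 = fM y (((endB ^ (i.1+1)) L).1) from rfl]
  rw [endB_pow]

lemma av_fin (i : Fin n) : av (M := M) n i.1 = Monoid.Coprod.inl (mkB n (of (i, true))) := by
  rw [av, dif_pos i.2, Fin.eta]

lemma bv_fin (i : Fin n) : bv (M := M) n i.1 = Monoid.Coprod.inl (mkB n (of (i, false))) := by
  rw [bv, dif_pos i.2, Fin.eta]

/-- the key invariant -/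
lemma key (hx1 : x ≠ 1) (w : Monoid.Coprod (BicyclicPow n) M) :
    ∀ (L : Tc M) (v : Monoid.Coprod (BicyclicPow n) M), parse n x y L.1 = some v →
      parse n x y ((rho M (phi n x y hxy w)) L).1 = some (w * v) := by
  have hy1 : y ≠ 1 := by
    intro hy
    apply hx1
    rw [← hxy, hy, mul_one]
  induction w using Monoid.Coprod.induction_on with
  | mul w₁ w₂ ih₁ ih₂ =>
    intro L v hL
    rw [map_mul, map_mul]
    have h2 := ih₂ L v hL
    have h1 := ih₁ ((rho M (phi n x y hxy w₂)) L) (w₂ * v) h2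
    rw [show ((rho M (phi n x y hxy w₁) * rho M (phi n x y hxy w₂)) L)
        = (rho M (phi n x y hxy w₁)) ((rho M (phi n x y hxy w₂)) L) from rfl]
    rw [h1, mul_assoc]
  | inr m =>
    intro L v hL
    rw [show phi n x y hxy (Monoid.Coprod.inr m) = Monoid.Coprod.inr m from
      Monoid.Coprod.lift_apply_inr _ _ _]
    rw [rho_inr]
    exact step_m n x y m hL
  | inl b =>
    induction b using Con.induction_on with
    | _ u =>
      have hu : ∀ w : FreeMonoid (Fin n × Bool),
          (w : (conGen (bicyclicRel n)).Quotient) = mkB n w := fun _ => rfl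
      rw [hu]
      induction u using FreeMonoid.inductionOn' with
      | one =>
        intro L v hL
        rw [map_one, map_one, map_one, map_one]
        rw [show ((1 : Function.End (Tc M)) L) = L from rfl, hL, one_mul]
      | of_mul g u ihu =>
        intro L v hL
        rw [map_mul, map_mul, map_mul, map_mul]
        have hrest := ihu L v hL
        rw [show ∀ f g : Function.End (Tc M), ∀ s : Tc M, (f * g) s = f (g s) from
          fun _ _ _ => rfl]
        obtain ⟨i, tf⟩ := g
        set L₂ := (rho M (phi n x y hxy (Monoid.Coprod.inl (mkB n u)))) L with hL₂
        rw [mul_assoc]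
        cases tf
        · have := step_b n x y hy1 i.1 hrest
          rw [← rho_gen_false n x y hxy i L₂] at this
          rw [this, bv_fin]
        · have := step_a n x y hx1 hxy i.2 hrest
          rw [← rho_gen_true n x y hxy i L₂] at this
          rw [this, av_fin]

end main


end

end Stmt4


/-- Let `M` be a monoid whose set `R₁(M) = {x | ∃ y, x·y = 1}`
of right-invertible elements is not `{1}`. Then for every `n ≥ 1` there is a
monoid morphism `φ : 𝔹^(n) ∗ M →* 𝔹 ∗ M` with `φ⁻¹(1) = {1}`. -/
theorem bicyclicPow_free_product_embeds
    {M : Type} [Monoid M] (hM : {x : M | ∃ y : M, x * y = 1} ≠ {1})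
    (n : ℕ) (hn : 1 ≤ n) :
    ∃ φ : Monoid.Coprod (BicyclicPow n) M →* Monoid.Coprod Bicyclic M,
      (φ : Monoid.Coprod (BicyclicPow n) M → Monoid.Coprod Bicyclic M) ⁻¹' {1}
        = {1} := by
  classical
  have h1S : (1 : M) ∈ {x : M | ∃ y : M, x * y = 1} := ⟨1, one_mul 1⟩
  have hex : ∃ x ∈ {x : M | ∃ y : M, x * y = 1}, x ≠ 1 := by
    by_contra hc
    push_neg at hc
    exact hM (Set.eq_singleton_iff_unique_mem.2 ⟨h1S, fun z hz => hc z hz⟩)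
  obtain ⟨x, ⟨y, hxy⟩, hx1⟩ := hex
  refine ⟨Stmt4.phi n x y hxy, ?_⟩
  ext w
  simp only [Set.mem_preimage, Set.mem_singleton_iff]
  constructor
  · intro hw
    have hk := Stmt4.key n x y hxy hx1 w ⟨[], trivial⟩ 1 (by simp)
    rw [hw, map_one] at hk
    rw [show ((1 : Function.End (Stmt4.Tc M)) ⟨[], trivial⟩)
        = (⟨[], trivial⟩ : Stmt4.Tc M) from rfl] at hk
    rw [show ((⟨[], trivial⟩ : Stmt4.Tc M)).1 = [] from rfl] at hk
    rw [Stmt4.parse_nil] at hk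
    have := Option.some.inj hk
    rw [mul_one] at this
    exact this.symm
  · intro hw
    rw [hw, map_one]
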